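/- For a symmetric matrix S ∈ ℝ^{n×n}, the L2-matrix measure of the k-additive compound satisfies μ_2(A^{[k]}) = (1/2) Σ_{i=1}^k λ_i(A + A^T), the sum of the k largest eigenvalues of (A+A^T)/2. -/

import Mathlib

open Matrix

/-- The `k`-multiplicative compound of a matrix: the matrix of all `k × k` minors,
indexed by the `k`-element subsets of the row and column index sets (ordered
increasingly / lexicographically). -/
noncomputable def mulCompound {𝕜 : Type*} [CommRing 𝕜] {n m : ℕ}
    (A : Matrix (Fin n) (Fin m) 𝕜) (k : ℕ) :
    Matrix {s : Finset (Fin n) // s.card = k} {t : Finset (Fin m) // t.card = k} 𝕜 :=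
  fun α β => (A.submatrix (α.1.orderEmbOfFin α.2) (β.1.orderEmbOfFin β.2)).det

/-- The `k`-additive compound: `A^{[k]} := (d/dε) (I + ε A)^{(k)} |_{ε = 0}`. -/
noncomputable def addCompound {𝕜 : Type*} [NontriviallyNormedField 𝕜] {n : ℕ}
    (A : Matrix (Fin n) (Fin n) 𝕜) (k : ℕ) :
    Matrix {s : Finset (Fin n) // s.card = k} {s : Finset (Fin n) // s.card = k} 𝕜 :=
  fun α β => deriv (fun ε : 𝕜 => mulCompound (1 + ε • A) k α β) 0


section AuxProofs
open Finset

lemma det_mul_expand {R : Type*} [CommRing R] {k n : ℕ} (A : Matrix (Fin k) (Fin n) R)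
    (B : Matrix (Fin n) (Fin k) R) :
    det (A * B) = ∑ f : Fin k → Fin n, (∏ i, A i (f i)) * det (B.submatrix f id) := by
  have h1 : det (A * B) = (detRowAlternating : (Fin k → R) [⋀^Fin k]→ₗ[R] R)
      (fun i => ∑ j, A i j • B j) := by
    congr 1; ext i l; simp [mul_apply]
  have h2 := (detRowAlternating : (Fin k → R) [⋀^Fin k]→ₗ[R] R).toMultilinearMap.map_sum
    (fun i (j : Fin n) => A i j • B j)
  simp only [AlternatingMap.coe_multilinearMap] at h2
  rw [h1, h2]
  refine Finset.sum_congr rfl fun f _ => ?_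
  have h3 := (detRowAlternating : (Fin k → R) [⋀^Fin k]→ₗ[R] R).toMultilinearMap.map_smul_univ
    (fun i => A i (f i)) (fun i => B (f i))
  simp only [AlternatingMap.coe_multilinearMap] at h3
  rw [h3, smul_eq_mul]
  rfl

lemma image_orderEmbOfFin {n k : ℕ} (γ : Finset (Fin n)) (h : γ.card = k) :
    Finset.image (γ.orderEmbOfFin h) univ = γ := by
  apply Finset.coe_injective
  rw [Finset.coe_image, Finset.coe_univ, Set.image_univ]
  exact Finset.range_orderEmbOfFin γ h

lemma image_comp_perm {n k : ℕ} (γ : Finset (Fin n)) (h : γ.card = k) (τ : Equiv.Perm (Fin k)) :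
    Finset.image ((γ.orderEmbOfFin h) ∘ τ) univ = γ := by
  rw [← Finset.image_image, Finset.image_univ_equiv, image_orderEmbOfFin]

noncomputable def injDecomp {k n : ℕ} :
    (Σ _γ : {s : Finset (Fin n) // s.card = k}, Equiv.Perm (Fin k)) ≃
      {f : Fin k → Fin n // Function.Injective f} := by
  refine Equiv.ofBijective
    (fun p => ⟨p.1.1.orderEmbOfFin p.1.2 ∘ p.2,
      (p.1.1.orderEmbOfFin p.1.2).injective.comp p.2.injective⟩) ⟨?_, ?_⟩
  · rintro ⟨⟨γ₁, h₁⟩, τ₁⟩ ⟨⟨γ₂, h₂⟩, τ₂⟩ hEq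
    have hfun : (γ₁.orderEmbOfFin h₁) ∘ τ₁ = (γ₂.orderEmbOfFin h₂) ∘ τ₂ :=
      congrArg Subtype.val hEq
    have himg : γ₁ = γ₂ := by
      rw [← image_comp_perm γ₁ h₁ τ₁, ← image_comp_perm γ₂ h₂ τ₂, hfun]
    subst himg
    have hh : h₁ = h₂ := rfl
    subst hh
    have hτ : τ₁ = τ₂ := by
      apply Equiv.ext; intro i
      exact (γ₁.orderEmbOfFin h₁).injective (congrFun hfun i)
    subst hτ; rfl
  · rintro ⟨f, hf⟩
    set γ : Finset (Fin n) := Finset.image f univ with hγ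
    have hcard : γ.card = k := by
      rw [hγ, Finset.card_image_of_injective _ hf, Finset.card_univ, Fintype.card_fin]
    have hmem : ∀ i, f i ∈ γ := fun i => Finset.mem_image_of_mem f (mem_univ i)
    set g : Fin k → Fin k := fun i => (γ.orderIsoOfFin hcard).symm ⟨f i, hmem i⟩ with hg
    have hginj : Function.Injective g := by
      intro a b hab
      apply hf
      have := (γ.orderIsoOfFin hcard).symm.injective hab
      exact congrArg Subtype.val this
    have hgbij : Function.Bijective g := Finite.injective_iff_bijective.mp hginj
    refine ⟨⟨⟨γ, hcard⟩, Equiv.ofBijective g hgbij⟩, ?_⟩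
    apply Subtype.ext
    funext i
    show γ.orderEmbOfFin hcard (g i) = f i
    have : γ.orderEmbOfFin hcard (g i) = ((γ.orderIsoOfFin hcard) (g i) : Fin n) := by
      rw [Finset.coe_orderIsoOfFin_apply]
    rw [this, hg, OrderIso.apply_symm_apply]

lemma sum_perm_eq_det {R : Type*} [CommRing R] {k n : ℕ} (A : Matrix (Fin k) (Fin n) R)
    (γ : Finset (Fin n)) (h : γ.card = k) :
    ∑ τ : Equiv.Perm (Fin k), ((Equiv.Perm.sign τ : ℤ) : R) * ∏ i, A i (γ.orderEmbOfFin h (τ i))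
      = det (A.submatrix id (γ.orderEmbOfFin h)) := by
  rw [det_apply']
  refine Fintype.sum_equiv (Equiv.inv (Equiv.Perm (Fin k))) _ _ fun τ => ?_
  simp only [Equiv.inv_apply]
  rw [Equiv.Perm.sign_inv]
  congr 1
  refine Fintype.prod_equiv τ _ _ fun i => ?_
  simp

theorem cauchyBinet {R : Type*} [CommRing R] {k n : ℕ} (A : Matrix (Fin k) (Fin n) R)
    (B : Matrix (Fin n) (Fin k) R) :
    det (A * B) = ∑ γ : {s : Finset (Fin n) // s.card = k},
      det (A.submatrix id (γ.1.orderEmbOfFin γ.2)) * det (B.submatrix (γ.1.orderEmbOfFin γ.2) id) := by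
  classical
  rw [det_mul_expand]
  have hzero : ∀ f : Fin k → Fin n, ¬ Function.Injective f →
      (∏ i, A i (f i)) * det (B.submatrix f id) = 0 := by
    intro f hf
    simp only [Function.Injective] at hf; push_neg at hf
    obtain ⟨a, b, hab, hne⟩ := hf
    rw [det_zero_of_row_eq hne (by funext j; simp [hab]), mul_zero]
  have hrestrict : ∑ f : Fin k → Fin n, (∏ i, A i (f i)) * det (B.submatrix f id)
      = ∑ f : {f : Fin k → Fin n // Function.Injective f},
          (∏ i, A i (f.1 i)) * det (B.submatrix f.1 id) := by
    have hz : ∑ f : {f : Fin k → Fin n // ¬ Function.Injective f},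
        (∏ i, A i (f.1 i)) * det (B.submatrix f.1 id) = 0 :=
      Finset.sum_eq_zero fun f _ => hzero f.1 f.2
    rw [← Fintype.sum_subtype_add_sum_subtype (Function.Injective)
      (fun f : Fin k → Fin n => (∏ i, A i (f i)) * det (B.submatrix f id)), hz, add_zero]
  rw [hrestrict, ← Equiv.sum_comp (injDecomp (k := k) (n := n))
    (fun f => (∏ i, A i (f.1 i)) * det (B.submatrix f.1 id)),
    ← Finset.univ_sigma_univ, Finset.sum_sigma]
  refine Finset.sum_congr rfl fun γ _ => ?_
  rw [← sum_perm_eq_det A γ.1 γ.2, Finset.sum_mul]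
  refine Finset.sum_congr rfl fun τ _ => ?_
  show (∏ i, A i (γ.1.orderEmbOfFin γ.2 (τ i))) * det (B.submatrix (γ.1.orderEmbOfFin γ.2 ∘ τ) id) = _
  have hsub : B.submatrix (γ.1.orderEmbOfFin γ.2 ∘ τ) id
      = (B.submatrix (γ.1.orderEmbOfFin γ.2) id).submatrix τ id := rfl
  rw [hsub, det_permute]
  push_cast
  ring


section mulCompoundLemmas
variable {R : Type*} [CommRing R] {n k : ℕ}

lemma mulCompound_mul (A B : Matrix (Fin n) (Fin n) R) (k : ℕ) :
    mulCompound (A * B) k = mulCompound A k * mulCompound B k := by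
  ext α β
  have h : (A * B).submatrix (α.1.orderEmbOfFin α.2) (β.1.orderEmbOfFin β.2)
      = (A.submatrix (α.1.orderEmbOfFin α.2) id) * (B.submatrix id (β.1.orderEmbOfFin β.2)) := by
    rw [Matrix.submatrix_mul A B _ id _ Function.bijective_id]
  show det _ = _
  rw [h, cauchyBinet, Matrix.mul_apply]
  rfl

lemma mulCompound_transpose (A : Matrix (Fin n) (Fin n) R) (k : ℕ) :
    mulCompound Aᵀ k = (mulCompound A k)ᵀ := by
  ext α β
  show det (Aᵀ.submatrix _ _) = det (A.submatrix _ _)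
  rw [← Matrix.transpose_submatrix, Matrix.det_transpose]

lemma mulCompound_diagonal (v : Fin n → R) (k : ℕ) :
    mulCompound (diagonal v) k = diagonal
      (fun γ : {s : Finset (Fin n) // s.card = k} => ∏ j, v (γ.1.orderEmbOfFin γ.2 j)) := by
  classical
  ext α β
  by_cases h : α = β
  · subst h
    show det ((diagonal v).submatrix _ _) = _
    rw [Matrix.submatrix_diagonal v _ (α.1.orderEmbOfFin α.2).injective, det_diagonal,
      diagonal_apply_eq]
    rfl
  · rw [diagonal_apply_ne _ h]
    have hne : α.1 ≠ β.1 := fun hh => h (Subtype.ext hh)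
    have hnsub : ¬ α.1 ⊆ β.1 := fun hsub =>
      hne (Finset.eq_of_subset_of_card_le hsub (by rw [α.2, β.2]))
    obtain ⟨x, hxα, hxβ⟩ := Finset.not_subset.mp hnsub
    have hx : ∃ i, α.1.orderEmbOfFin α.2 i = x := by
      have : x ∈ Set.range (α.1.orderEmbOfFin α.2) := by
        rw [Finset.range_orderEmbOfFin]; exact hxα
      exact this
    obtain ⟨i, hi⟩ := hx
    apply Matrix.det_eq_zero_of_row_eq_zero i
    intro j
    rw [Matrix.submatrix_apply, Matrix.diagonal_apply_ne]
    rw [hi]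
    intro hEq
    exact hxβ (hEq ▸ Finset.orderEmbOfFin_mem β.1 β.2 j)

lemma mulCompound_one : mulCompound (1 : Matrix (Fin n) (Fin n) R) k = 1 := by
  rw [← Matrix.diagonal_one, mulCompound_diagonal]
  simp

end mulCompoundLemmas

section derivLemmas
variable {n k : ℕ}

lemma hasDerivAt_prod_one_add {ι : Type*} [DecidableEq ι] [Fintype ι] (w : ι → ℝ) :
    HasDerivAt (fun ε : ℝ => ∏ i, (1 + ε * w i)) (∑ i, w i) 0 := by
  have h := HasDerivAt.fun_finsetProd (u := univ) (f := fun i (ε : ℝ) => 1 + ε * w i)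
    (f' := w) (x := 0) (fun i _ => by
      simpa using ((hasDerivAt_id (0:ℝ)).mul_const (w i)).const_add 1)
  simpa using h

noncomputable def detDeriv (N B : Matrix (Fin k) (Fin k) ℝ) : ℝ :=
  ∑ σ : Equiv.Perm (Fin k), ((Equiv.Perm.sign σ : ℤ) : ℝ) *
    ∑ i, B (σ i) i * ∏ j ∈ univ.erase i, N (σ j) j

lemma hasDerivAt_det_add_smul (N B : Matrix (Fin k) (Fin k) ℝ) :
    HasDerivAt (fun ε : ℝ => det (N + ε • B)) (detDeriv N B) 0 := by
  have hfun : (fun ε : ℝ => det (N + ε • B)) = fun ε =>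
      ∑ σ : Equiv.Perm (Fin k), ((Equiv.Perm.sign σ : ℤ) : ℝ) *
        ∏ i, (N (σ i) i + ε * B (σ i) i) := by
    funext ε
    rw [det_apply']
    simp [Matrix.add_apply, Matrix.smul_apply, smul_eq_mul]
  rw [hfun]
  unfold detDeriv
  apply HasDerivAt.fun_sum
  intro σ _
  apply HasDerivAt.const_mul
  have h := HasDerivAt.fun_finsetProd (u := univ)
    (f := fun i (ε : ℝ) => N (σ i) i + ε * B (σ i) i)
    (f' := fun i => B (σ i) i) (x := 0) (fun i _ => by
      simpa using ((hasDerivAt_id (0:ℝ)).mul_const (B (σ i) i)).const_add (N (σ i) i))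
  simp only [zero_mul, add_zero, smul_eq_mul] at h
  convert h using 1
  refine Finset.sum_congr rfl fun i _ => ?_
  ring

lemma detDeriv_add (N B C : Matrix (Fin k) (Fin k) ℝ) :
    detDeriv N (B + C) = detDeriv N B + detDeriv N C := by
  unfold detDeriv
  rw [← Finset.sum_add_distrib]
  refine Finset.sum_congr rfl fun σ _ => ?_
  rw [← mul_add, ← Finset.sum_add_distrib]
  congr 1
  refine Finset.sum_congr rfl fun i _ => ?_
  simp [Matrix.add_apply, add_mul]

lemma detDeriv_smul (N B : Matrix (Fin k) (Fin k) ℝ) (c : ℝ) :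
    detDeriv N (c • B) = c * detDeriv N B := by
  unfold detDeriv
  rw [Finset.mul_sum]
  refine Finset.sum_congr rfl fun σ _ => ?_
  rw [mul_left_comm]
  congr 1
  rw [Finset.mul_sum]
  refine Finset.sum_congr rfl fun i _ => ?_
  simp only [Matrix.smul_apply, smul_eq_mul]
  ring

lemma addCompound_apply {n : ℕ} (A : Matrix (Fin n) (Fin n) ℝ) (k : ℕ)
    (α β : {s : Finset (Fin n) // s.card = k}) :
    addCompound A k α β = detDeriv
      ((1 : Matrix (Fin n) (Fin n) ℝ).submatrix (α.1.orderEmbOfFin α.2) (β.1.orderEmbOfFin β.2))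
      (A.submatrix (α.1.orderEmbOfFin α.2) (β.1.orderEmbOfFin β.2)) := by
  have hfun : (fun ε : ℝ => mulCompound (1 + ε • A) k α β) = fun ε =>
      det ((1 : Matrix (Fin n) (Fin n) ℝ).submatrix (α.1.orderEmbOfFin α.2) (β.1.orderEmbOfFin β.2)
        + ε • (A.submatrix (α.1.orderEmbOfFin α.2) (β.1.orderEmbOfFin β.2))) := by
    funext ε
    show det ((1 + ε • A).submatrix _ _) = _
    simp [Matrix.submatrix_add, Matrix.submatrix_smul]
  show deriv _ 0 = _
  rw [hfun]
  exact (hasDerivAt_det_add_smul _ _).deriv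

lemma addCompound_transpose {n : ℕ} (A : Matrix (Fin n) (Fin n) ℝ) (k : ℕ) :
    (addCompound A k)ᵀ = addCompound Aᵀ k := by
  ext α β
  show deriv (fun ε : ℝ => mulCompound (1 + ε • A) k β α) 0
      = deriv (fun ε : ℝ => mulCompound (1 + ε • Aᵀ) k α β) 0
  congr 1
  funext ε
  have h1 : (1 : Matrix (Fin n) (Fin n) ℝ) + ε • Aᵀ = (1 + ε • A)ᵀ := by
    rw [Matrix.transpose_add, Matrix.transpose_one, Matrix.transpose_smul]
  rw [h1, mulCompound_transpose]
  rfl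

lemma half_addCompound {n : ℕ} (A : Matrix (Fin n) (Fin n) ℝ) (k : ℕ) :
    (1 / 2 : ℝ) • (addCompound A k + (addCompound A k)ᵀ)
      = addCompound ((1 / 2 : ℝ) • (A + Aᵀ)) k := by
  ext α β
  rw [Matrix.smul_apply, Matrix.add_apply, addCompound_transpose,
    addCompound_apply, addCompound_apply, addCompound_apply, ← detDeriv_add,
    show ((1/2 : ℝ) • (A + Aᵀ)).submatrix (α.1.orderEmbOfFin α.2) (β.1.orderEmbOfFin β.2)
      = (1/2 : ℝ) • (A.submatrix (α.1.orderEmbOfFin α.2) (β.1.orderEmbOfFin β.2)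
        + Aᵀ.submatrix (α.1.orderEmbOfFin α.2) (β.1.orderEmbOfFin β.2)) from rfl,
    detDeriv_smul, smul_eq_mul]

end derivLemmas

lemma addCompound_conj {n : ℕ} (k : ℕ) (U : Matrix (Fin n) (Fin n) ℝ) (d : Fin n → ℝ)
    (hU : U * Uᵀ = 1) :
    addCompound (U * diagonal d * Uᵀ) k =
      mulCompound U k * diagonal (fun γ : {s : Finset (Fin n) // s.card = k} =>
        ∑ j, d (γ.1.orderEmbOfFin γ.2 j)) * (mulCompound U k)ᵀ := by
  classical
  ext α β
  set P := mulCompound U k with hP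
  have hfun : (fun ε : ℝ => mulCompound (1 + ε • (U * diagonal d * Uᵀ)) k α β)
      = fun ε => ∑ γ : {s : Finset (Fin n) // s.card = k},
          P α γ * (∏ j, (1 + ε * d (γ.1.orderEmbOfFin γ.2 j))) * Pᵀ γ β := by
    funext ε
    have h1 : (1 : Matrix (Fin n) (Fin n) ℝ) + ε • (U * diagonal d * Uᵀ)
        = U * diagonal (fun i => 1 + ε * d i) * Uᵀ := by
      have h2 : diagonal (fun i : Fin n => 1 + ε * d i)
          = 1 + ε • diagonal d := by
        rw [← Matrix.diagonal_one, ← Matrix.diagonal_smul, Matrix.diagonal_add]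
        rfl
      rw [h2, Matrix.mul_add, Matrix.add_mul, Matrix.mul_one, hU,
        Matrix.mul_smul, Matrix.smul_mul]
    rw [h1, mulCompound_mul, mulCompound_mul, mulCompound_diagonal, mulCompound_transpose]
    rw [Matrix.mul_apply]
    refine Finset.sum_congr rfl fun γ _ => ?_
    rw [Matrix.mul_diagonal]
  show deriv _ 0 = _
  rw [hfun]
  have hd : HasDerivAt (fun ε => ∑ γ : {s : Finset (Fin n) // s.card = k},
        P α γ * (∏ j, (1 + ε * d (γ.1.orderEmbOfFin γ.2 j))) * Pᵀ γ β)
      (∑ γ : {s : Finset (Fin n) // s.card = k},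
        P α γ * (∑ j, d (γ.1.orderEmbOfFin γ.2 j)) * Pᵀ γ β) 0 := by
    apply HasDerivAt.fun_sum
    intro γ _
    exact ((hasDerivAt_prod_one_add _).const_mul (P α γ)).mul_const (Pᵀ γ β)
  rw [hd.deriv]
  rw [Matrix.mul_apply]
  refine Finset.sum_congr rfl fun γ _ => ?_
  rw [Matrix.mul_diagonal]

open Polynomial in
lemma charpoly_conj {n : ℕ} (P B Q : Matrix (Fin n) (Fin n) ℝ) (hPQ : P * Q = 1) :
    (P * B * Q).charpoly = B.charpoly := by
  have hmm : ∀ (X Y : Matrix (Fin n) (Fin n) ℝ),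
      (C : ℝ →+* ℝ[X]).mapMatrix (X * Y) = (C : ℝ →+* ℝ[X]).mapMatrix X *
        (C : ℝ →+* ℝ[X]).mapMatrix Y := fun X Y => by simp
  have hone : (C : ℝ →+* ℝ[X]).mapMatrix (P * Q) = 1 := by rw [hPQ]; simp
  have h : charmatrix (P * B * Q) = ((C : ℝ →+* ℝ[X]).mapMatrix P) * charmatrix B *
      ((C : ℝ →+* ℝ[X]).mapMatrix Q) := by
    unfold charmatrix
    rw [Matrix.mul_sub, Matrix.sub_mul]
    congr 1
    · -- scalar X = P.map C * scalar X * Q.map C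
      have comm : (C : ℝ →+* ℝ[X]).mapMatrix P * Matrix.scalar (Fin n) (X : ℝ[X])
          = Matrix.scalar (Fin n) (X : ℝ[X]) * (C : ℝ →+* ℝ[X]).mapMatrix P :=
        (Matrix.scalar_commute (X : ℝ[X]) (Commute.all _) _).symm
      rw [comm, Matrix.mul_assoc, ← hmm, hone, Matrix.mul_one]
    · rw [hmm, hmm]
  unfold Matrix.charpoly
  rw [h, Matrix.det_mul, Matrix.det_mul]
  have : det ((C : ℝ →+* ℝ[X]).mapMatrix P) * det ((C : ℝ →+* ℝ[X]).mapMatrix Q) = 1 := by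
    rw [← Matrix.det_mul, ← hmm, hone, Matrix.det_one]
  ring_nf
  calc det ((C : ℝ →+* ℝ[X]).mapMatrix P) * det (charmatrix B) * det ((C : ℝ →+* ℝ[X]).mapMatrix Q)
      = det (charmatrix B) * (det ((C : ℝ →+* ℝ[X]).mapMatrix P) * det ((C : ℝ →+* ℝ[X]).mapMatrix Q)) := by ring
    _ = det (charmatrix B) := by rw [this, mul_one]

open Polynomial in
lemma charpoly_diagonal {n : ℕ} (d : Fin n → ℝ) :
    (diagonal d).charpoly = ∏ i, (X - C (d i)) := by
  unfold Matrix.charpoly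
  have h : charmatrix (diagonal d) = diagonal (fun i => X - C (d i)) := by
    apply Matrix.ext; intro i j
    by_cases hij : i = j
    · subst hij; simp [charmatrix_apply_eq]
    · rw [charmatrix_apply_ne _ _ _ hij, diagonal_apply_ne _ hij, diagonal_apply_ne _ hij]
      simp
  rw [h, det_diagonal]

open Polynomial in
lemma roots_charpoly_diagonal {n : ℕ} (d : Fin n → ℝ) :
    (diagonal d).charpoly.roots = (Finset.univ.val : Multiset (Fin n)).map d := by
  rw [charpoly_diagonal]
  have : (∏ i, (X - C (d i))) =
      (((Finset.univ.val : Multiset (Fin n)).map d).map fun a => X - C a).prod := by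
    rw [Multiset.map_map]
    rfl
  rw [this, Polynomial.roots_multiset_prod_X_sub_C]

lemma exists_perm_of_map_eq {n : ℕ} (f g : Fin n → ℝ)
    (h : (Finset.univ.val : Multiset (Fin n)).map f = (Finset.univ.val : Multiset (Fin n)).map g) :
    ∃ σ : Equiv.Perm (Fin n), ∀ i, g (σ i) = f i := by
  classical
  have hcard : ∀ a : ℝ, Fintype.card {i // f i = a} = Fintype.card {i // g i = a} := by
    intro a
    rw [Fintype.card_subtype, Fintype.card_subtype]
    have h1 : ∀ (u : Fin n → ℝ), (Finset.univ.filter (fun i => u i = a)).card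
        = Multiset.count a ((Finset.univ.val : Multiset (Fin n)).map u) := by
      intro u
      rw [Multiset.count_map]
      rw [Finset.card_filter]
      simp [Finset.card, Finset.filter_val, eq_comm]
    rw [h1 f, h1 g, h]
  have e : ∀ a : ℝ, {i // f i = a} ≃ {i // g i = a} := fun a => Fintype.equivOfCardEq (hcard a)
  exact ⟨Equiv.ofFiberEquiv e, fun i => Equiv.ofFiberEquiv_map e i⟩

lemma sum_orderEmbOfFin' {n k : ℕ} (γ : Finset (Fin n)) (h : γ.card = k) (v : Fin n → ℝ) :
    ∑ j, v (γ.orderEmbOfFin h j) = ∑ x ∈ γ, v x := by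
  conv_rhs => rw [← image_orderEmbOfFin γ h]
  rw [Finset.sum_image (fun x _ y _ hxy => (γ.orderEmbOfFin h).injective hxy)]

lemma le_orderEmb_apply {k n : ℕ} (e : Fin k ↪o Fin n) (j : Fin k) : (j : ℕ) ≤ (e j : ℕ) := by
  have key : ∀ m : ℕ, ∀ j : Fin k, (j : ℕ) = m → (j : ℕ) ≤ (e j : ℕ) := by
    intro m
    induction m using Nat.strong_induction_on with
    | _ m ih =>
      intro j hj
      rcases Nat.eq_zero_or_pos j.val with h0 | hpos
      · omega
      · have hk0 : (j.val - 1) < k := by omega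
        have hlt : (⟨j.val - 1, hk0⟩ : Fin k) < j := by rw [Fin.lt_def]; simp; omega
        have h1 := ih (j.val - 1) (by omega) ⟨j.val - 1, hk0⟩ rfl
        have h2 : e ⟨j.val - 1, hk0⟩ < e j := e.strictMono hlt
        rw [Fin.lt_def] at h2
        simp only [Fin.val_mk] at h1 h2 ⊢
        omega
  exact key _ j rfl

lemma filter_lt_eq_image {n k : ℕ} (hk : k ≤ n) :
    Finset.univ.filter (fun i : Fin n => (i : ℕ) < k)
      = Finset.image (fun j : Fin k => Fin.castLE hk j) Finset.univ := by
  ext y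
  simp only [Finset.mem_filter, Finset.mem_univ, true_and, Finset.mem_image]
  constructor
  · intro hy; exact ⟨⟨y.1, hy⟩, by simp [Fin.castLE, Fin.ext_iff]⟩
  · rintro ⟨j, rfl⟩; exact j.2

lemma filter_lt_card {n k : ℕ} (hk : k ≤ n) :
    (Finset.univ.filter (fun i : Fin n => (i : ℕ) < k)).card = k := by
  rw [filter_lt_eq_image hk, Finset.card_image_of_injective _ (Fin.strictMono_castLE hk).injective,
    Finset.card_univ, Fintype.card_fin]

lemma antitone_subset_sum_le {n k : ℕ} (hk : k ≤ n) (lam : Fin n → ℝ) (hmono : Antitone lam)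
    (δ : Finset (Fin n)) (hδ : δ.card = k) :
    ∑ x ∈ δ, lam x ≤ ∑ i ∈ Finset.univ.filter (fun i : Fin n => (i : ℕ) < k), lam i := by
  classical
  rw [filter_lt_eq_image hk, Finset.sum_image (fun a _ b _ hab => by
    simpa [Fin.ext_iff] using congrArg Fin.val hab)]
  rw [← sum_orderEmbOfFin' δ hδ lam]
  apply Finset.sum_le_sum
  intro j _
  apply hmono
  rw [Fin.le_def]
  exact le_orderEmb_apply (δ.orderEmbOfFin hδ) j


/-- `μ₂(A^{[k]}) = (1/2) Σ_{i=1}^k λ_i(A + Aᵀ)`: the `L₂` matrix measure of the `k`-additive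
compound equals the sum of the `k` largest eigenvalues of `(A + Aᵀ)/2`. Here `μ₂(B)` is the
largest eigenvalue of `(B + Bᵀ)/2`, i.e. the supremum of its (real) spectrum, and
`lam : Fin n → ℝ` lists the eigenvalues of `A + Aᵀ` in decreasing order with multiplicity. -/
theorem muTwo_addCompound {n : ℕ} (A : Matrix (Fin n) (Fin n) ℝ) (k : ℕ)
    (hk1 : 1 ≤ k) (hk : k ≤ n)
    (lam : Fin n → ℝ) (hmono : Antitone lam)
    (hlam : (A + Aᵀ).charpoly.roots = (Finset.univ.val : Multiset (Fin n)).map lam) :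
    sSup (spectrum ℝ ((1 / 2 : ℝ) • (addCompound A k + (addCompound A k)ᵀ))) =
      (1 / 2) * ∑ i ∈ Finset.univ.filter (fun i : Fin n => (i : ℕ) < k), lam i := by

  classical
  have hS : (A + Aᵀ).IsHermitian := by
    show (A + Aᵀ)ᴴ = A + Aᵀ
    rw [Matrix.conjTranspose_eq_transpose_of_trivial, Matrix.transpose_add,
      Matrix.transpose_transpose, add_comm]
  set V : Matrix (Fin n) (Fin n) ℝ :=
    (Matrix.IsHermitian.eigenvectorUnitary hS : Matrix (Fin n) (Fin n) ℝ) with hV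
  set c : Fin n → ℝ := hS.eigenvalues with hc
  have hstar : star V = Vᵀ := by
    rw [Matrix.star_eq_conjTranspose, Matrix.conjTranspose_eq_transpose_of_trivial]
  have hV1 : V * Vᵀ = 1 := by
    rw [← hstar]
    exact Matrix.mem_unitaryGroup_iff.mp (Matrix.IsHermitian.eigenvectorUnitary hS).2
  have hV2 : Vᵀ * V = 1 := by
    rw [← hstar]
    exact Matrix.mem_unitaryGroup_iff'.mp (Matrix.IsHermitian.eigenvectorUnitary hS).2
  have hspec : A + Aᵀ = V * diagonal c * Vᵀ := by
    have h := Matrix.IsHermitian.spectral_theorem hS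
    rw [Unitary.conjStarAlgAut_apply, hstar] at h
    exact h
  have hroots : (Finset.univ.val : Multiset (Fin n)).map c
      = (Finset.univ.val : Multiset (Fin n)).map lam := by
    rw [← hlam, hspec, charpoly_conj V (diagonal c) Vᵀ hV1, roots_charpoly_diagonal]
  obtain ⟨σ, hσ⟩ := exists_perm_of_map_eq c lam hroots
  -- hσ : ∀ i, lam (σ i) = c i
  have hmain : (1/2 : ℝ) • (addCompound A k + (addCompound A k)ᵀ)
      = mulCompound V k * diagonal (fun γ : {s : Finset (Fin n) // s.card = k} =>
          ∑ j, c (γ.1.orderEmbOfFin γ.2 j) / 2) * (mulCompound V k)ᵀ := by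
    rw [half_addCompound]
    have hM : (1/2 : ℝ) • (A + Aᵀ) = V * diagonal (fun i => c i / 2) * Vᵀ := by
      rw [hspec]
      have hD : diagonal (fun i : Fin n => c i / 2) = (1/2 : ℝ) • diagonal c := by
        have hfun : (fun i : Fin n => c i / 2) = (1/2 : ℝ) • c := by
          funext i
          simp only [Pi.smul_apply, smul_eq_mul]
          ring
        rw [hfun, Matrix.diagonal_smul]
      rw [hD, Matrix.mul_smul, Matrix.smul_mul]
    rw [hM, addCompound_conj k V (fun i => c i / 2) hV1]
  rw [show (1 / 2 : ℝ) = (1/2 : ℝ) from rfl] at *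
  rw [hmain]
  set P := mulCompound V k with hPdef
  have hP1 : P * Pᵀ = 1 := by
    rw [hPdef, ← mulCompound_transpose, ← mulCompound_mul, hV1, mulCompound_one]
  have hP2 : Pᵀ * P = 1 := by
    rw [hPdef, ← mulCompound_transpose, ← mulCompound_mul, hV2, mulCompound_one]
  set u : (Matrix {s : Finset (Fin n) // s.card = k}
      {s : Finset (Fin n) // s.card = k} ℝ)ˣ := ⟨P, Pᵀ, hP1, hP2⟩ with hu
  set sfun : {s : Finset (Fin n) // s.card = k} → ℝ :=
    fun γ => ∑ j, c (γ.1.orderEmbOfFin γ.2 j) / 2 with hsfun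
  have hconj : spectrum ℝ (P * diagonal sfun * Pᵀ) = spectrum ℝ (diagonal sfun) := by
    have heq : P * diagonal sfun * Pᵀ
        = (u : Matrix {s : Finset (Fin n) // s.card = k} {s : Finset (Fin n) // s.card = k} ℝ)
          * diagonal sfun
          * ((u⁻¹ : (Matrix {s : Finset (Fin n) // s.card = k}
              {s : Finset (Fin n) // s.card = k} ℝ)ˣ) :
            Matrix {s : Finset (Fin n) // s.card = k} {s : Finset (Fin n) // s.card = k} ℝ) := rfl
    rw [heq, spectrum.units_conjugate]
  rw [hconj, spectrum_diagonal]
  apply IsGreatest.csSup_eq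
  constructor
  · -- membership
    set δ₀ := Finset.univ.filter (fun i : Fin n => (i : ℕ) < k) with hδ₀
    have hδ₀card : δ₀.card = k := filter_lt_card hk
    refine ⟨⟨δ₀.image σ.symm, by
      rw [Finset.card_image_of_injective _ σ.symm.injective, hδ₀card]⟩, ?_⟩
    show ∑ j, c ((δ₀.image σ.symm).orderEmbOfFin _ j) / 2 = _
    rw [sum_orderEmbOfFin' _ _ (fun x => c x / 2)]
    have h1 : ∑ x ∈ δ₀.image σ.symm, c x / 2 = ∑ y ∈ δ₀, c (σ.symm y) / 2 :=
      Finset.sum_image (fun a _ b _ hab => σ.symm.injective hab)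
    rw [h1]
    have h2 : ∀ y ∈ δ₀, c (σ.symm y) / 2 = lam y / 2 := by
      intro y _
      rw [← hσ (σ.symm y), Equiv.apply_symm_apply]
    rw [Finset.sum_congr rfl h2, ← Finset.sum_div]
    ring
  · rintro x ⟨γ, rfl⟩
    show ∑ j, c (γ.1.orderEmbOfFin γ.2 j) / 2 ≤ _
    rw [sum_orderEmbOfFin' _ _ (fun x => c x / 2)]
    have h1 : ∀ x ∈ γ.1, c x / 2 = lam (σ x) / 2 := fun x _ => by rw [hσ x]
    rw [Finset.sum_congr rfl h1]
    have h2 : ∑ x ∈ γ.1, lam (σ x) / 2 = ∑ y ∈ γ.1.image σ, lam y / 2 :=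
      (Finset.sum_image (f := fun y => lam y / 2) (g := ⇑σ) (s := γ.1)
        (fun a _ b _ hab => σ.injective hab)).symm
    rw [h2, ← Finset.sum_div]
    have h3 := antitone_subset_sum_le hk lam hmono (γ.1.image σ)
      (by rw [Finset.card_image_of_injective _ σ.injective, γ.2])
    linarith

end AuxProofs
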